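/- Let X be a real Banach space such that for every bounded linear operator T : X → X and every unit vector x at which T attains its norm, T maps the Birkhoff-James orthogonal complement of x into that of Tx (i.e., x ⊥_B w implies Tx ⊥_B Tw). Then X is smooth. -/

import Mathlib

/-- Birkhoff-James orthogonality: `u ⊥_B v` iff `‖u + λ v‖ ≥ ‖u‖` for all real `λ`. -/
def BJOrth {E : Type*} [NormedAddCommGroup E] [NormedSpace ℝ E] (u v : E) : Prop :=
  ∀ l : ℝ, ‖u‖ ≤ ‖u + l • v‖

theorem stmt15 {X : Type*} [NormedAddCommGroup X] [NormedSpace ℝ X] [CompleteSpace X]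
    (h : ∀ (T : X →L[ℝ] X) (x : X), ‖x‖ = 1 → ‖T x‖ = ‖T‖ →
      ∀ w : X, BJOrth x w → BJOrth (T x) (T w)) :
    ∀ z : X, ‖z‖ = 1 → ∃! f : X →L[ℝ] ℝ, ‖f‖ = 1 ∧ f z = 1 := by
  intro z hz
  have hz0 : z ≠ 0 := by
    intro h0; rw [h0, norm_zero] at hz; norm_num at hz
  obtain ⟨f, hf1, hfz⟩ := exists_dual_vector ℝ z (norm_ne_zero_iff.mpr hz0)
  rw [hz] at hfz
  refine ⟨f, ⟨hf1, by exact_mod_cast hfz⟩, ?_⟩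
  rintro g ⟨hg1, hgz⟩
  by_contra hne
  -- find w with f w = 0, g w ≠ 0
  have : ∃ u : X, g u ≠ f u := by
    by_contra hall
    push_neg at hall
    exact hne (ContinuousLinearMap.ext hall)
  obtain ⟨u, hu⟩ := this
  set w : X := u - f u • z with hw
  have hfw : f w = 0 := by
    simp [hw, hfz]
  have hgw : g w ≠ 0 := by
    simp only [hw, map_sub, map_smul, hgz, smul_eq_mul, mul_one]
    intro h0
    exact hu (sub_eq_zero.mp h0)
  -- z ⊥_B w
  have horth : BJOrth z w := by
    intro l
    have h1 : f (z + l • w) = 1 := by simp [hfz, hfw]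
    have h2 : |f (z + l • w)| ≤ ‖f‖ * ‖z + l • w‖ := by
      simpa using (f.le_opNorm (z + l • w)).trans_eq' (Real.norm_eq_abs _).symm
    rw [h1, hf1, one_mul] at h2
    calc ‖z‖ = 1 := hz
    _ ≤ ‖z + l • w‖ := le_trans (by norm_num) h2
  -- the operator T u = g u • z
  set T : X →L[ℝ] X := g.smulRight z with hT
  have hTz : T z = z := by simp [hT, hgz]
  have hTnorm : ‖T‖ = 1 := by
    rw [hT, ContinuousLinearMap.norm_smulRight_apply, hg1, hz, one_mul]
  have key := h T z hz (by rw [hTz, hz, hTnorm]) w horth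
  have := key (-(g w)⁻¹)
  rw [hTz] at this
  have hTw : T w = g w • z := by simp [hT]
  rw [hTw, smul_smul, neg_mul, inv_mul_cancel₀ hgw] at this
  simp [hz] at this
  linarith
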